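/- A metric space (X,d) is metrically convex — i.e., for all x, y ∈ X there exists z ∈ X with d(x,z) = d(z,y) = d(x,y)/2 — if and only if for every two nonempty bounded proximinal subsets M, W of X there exists a nonempty bounded subset Ω of X such that hausdorffDist(M,Ω) = hausdorffDist(Ω,W) = hausdorffDist(M,W)/2. -/

import Mathlib

open Metric Bornology

theorem hausdorffDist_singleton_pair {X : Type*} [MetricSpace X] (x y : X) :
    hausdorffDist ({x} : Set X) {y} = dist x y := by
  have fin : EMetric.hausdorffEdist ({x} : Set X) {y} ≠ ⊤ :=
    hausdorffEdist_ne_top_of_nonempty_of_bounded (Set.singleton_nonempty x)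
      (Set.singleton_nonempty y) isBounded_singleton isBounded_singleton
  apply le_antisymm
  · apply hausdorffDist_le_of_infDist dist_nonneg
    · rintro z rfl; simp [infDist_singleton]
    · rintro z rfl; simp [infDist_singleton, dist_comm]
  · have := infDist_le_hausdorffDist_of_mem (Set.mem_singleton x) fin
    simpa [infDist_singleton] using this

/-- A metric space is metrically convex iff every two nonempty bounded proximinal subsets
have a "midpoint" set with respect to the Hausdorff distance. -/
theorem metricallyConvex_iff_hausdorff_midpoints {X : Type*} [MetricSpace X] :
    (∀ x y : X, ∃ z : X, dist x z = dist x y / 2 ∧ dist z y = dist x y / 2) ↔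
    (∀ M W : Set X,
      M.Nonempty → IsBounded M → (∀ x : X, ∃ y ∈ M, dist x y = infDist x M) →
      W.Nonempty → IsBounded W → (∀ x : X, ∃ y ∈ W, dist x y = infDist x W) →
      ∃ Ω : Set X, Ω.Nonempty ∧ IsBounded Ω ∧
        hausdorffDist M Ω = hausdorffDist M W / 2 ∧
        hausdorffDist Ω W = hausdorffDist M W / 2) := by
  constructor
  · intro hconv M W hMne hMb hMprox hWne hWb hWprox
    set h := hausdorffDist M W with hdef
    have hfin : EMetric.hausdorffEdist M W ≠ ⊤ :=
      hausdorffEdist_ne_top_of_nonempty_of_bounded hMne hWne hMb hWb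
    have hfin' : EMetric.hausdorffEdist W M ≠ ⊤ := by
      rwa [EMetric.hausdorffEdist, EMetric.hausdorffEdist_comm]
    have hnn : (0:ℝ) ≤ h := hausdorffDist_nonneg
    set Ω : Set X := {z | infDist z M ≤ h / 2 ∧ infDist z W ≤ h / 2} with Ωdef
    -- every point of M has a point of Ω within h/2
    have hM : ∀ m ∈ M, infDist m Ω ≤ h / 2 := by
      intro m hm
      obtain ⟨w, hw, hdw⟩ := hWprox m
      have hle : dist m w ≤ h := by
        rw [hdw]; exact infDist_le_hausdorffDist_of_mem hm hfin
      obtain ⟨z, hz1, hz2⟩ := hconv m w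
      have hzΩ : z ∈ Ω := by
        constructor
        · calc infDist z M ≤ dist z m := infDist_le_dist_of_mem hm
            _ = dist m w / 2 := by rw [dist_comm, hz1]
            _ ≤ h / 2 := by linarith
        · calc infDist z W ≤ dist z w := infDist_le_dist_of_mem hw
            _ ≤ h / 2 := by rw [hz2]; linarith
      calc infDist m Ω ≤ dist m z := infDist_le_dist_of_mem hzΩ
        _ ≤ h / 2 := by rw [hz1]; linarith
    have hW : ∀ w ∈ W, infDist w Ω ≤ h / 2 := by
      intro w hw
      obtain ⟨m, hm, hdm⟩ := hMprox w
      have hle : dist w m ≤ h := by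
        rw [hdm]
        have := infDist_le_hausdorffDist_of_mem hw hfin'
        rwa [hausdorffDist_comm] at this
      obtain ⟨z, hz1, hz2⟩ := hconv w m
      have hzΩ : z ∈ Ω := by
        constructor
        · calc infDist z M ≤ dist z m := infDist_le_dist_of_mem hm
            _ ≤ h / 2 := by rw [hz2]; linarith
        · calc infDist z W ≤ dist z w := infDist_le_dist_of_mem hw
            _ = dist w m / 2 := by rw [dist_comm, hz1]
            _ ≤ h / 2 := by linarith
      calc infDist w Ω ≤ dist w z := infDist_le_dist_of_mem hzΩ
        _ ≤ h / 2 := by rw [hz1]; linarith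
    -- Ω nonempty
    obtain ⟨m0, hm0⟩ := hMne
    obtain ⟨w0, hw0, hd0⟩ := hWprox m0
    obtain ⟨z0, hz01, hz02⟩ := hconv m0 w0
    have hle0 : dist m0 w0 ≤ h := by
      rw [hd0]; exact infDist_le_hausdorffDist_of_mem hm0 hfin
    have hz0Ω : z0 ∈ Ω := by
      constructor
      · calc infDist z0 M ≤ dist z0 m0 := infDist_le_dist_of_mem hm0
          _ ≤ h / 2 := by rw [dist_comm, hz01]; linarith
      · calc infDist z0 W ≤ dist z0 w0 := infDist_le_dist_of_mem hw0
          _ ≤ h / 2 := by rw [hz02]; linarith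
    have hMne : M.Nonempty := ⟨m0, hm0⟩
    have hΩne : Ω.Nonempty := ⟨z0, hz0Ω⟩
    -- Ω bounded
    have hΩb : IsBounded Ω := by
      obtain ⟨R, hR⟩ := hMb.subset_closedBall m0
      apply isBounded_closedBall (x := m0) (r := h / 2 + 1 + R) |>.subset
      intro z hz
      have : infDist z M < h / 2 + 1 := lt_of_le_of_lt hz.1 (by linarith)
      obtain ⟨m, hm, hdm⟩ := (infDist_lt_iff ⟨m0, hm0⟩).1 this
      have hmball := hR hm
      simp only [mem_closedBall] at hmball ⊢
      calc dist z m0 ≤ dist z m + dist m m0 := dist_triangle _ _ _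
        _ ≤ h / 2 + 1 + R := by linarith
    have hfinMΩ : EMetric.hausdorffEdist M Ω ≠ ⊤ :=
      hausdorffEdist_ne_top_of_nonempty_of_bounded hMne hΩne hMb hΩb
    have hfinΩW : EMetric.hausdorffEdist Ω W ≠ ⊤ :=
      hausdorffEdist_ne_top_of_nonempty_of_bounded hΩne hWne hΩb hWb
    have h1 : hausdorffDist M Ω ≤ h / 2 := by
      apply hausdorffDist_le_of_infDist (by linarith) hM
      intro z hz; exact hz.1
    have h2 : hausdorffDist Ω W ≤ h / 2 := by
      apply hausdorffDist_le_of_infDist (by linarith) (fun z hz => hz.2) hW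
    have htri : h ≤ hausdorffDist M Ω + hausdorffDist Ω W :=
      hausdorffDist_triangle hfinMΩ
    exact ⟨Ω, hΩne, hΩb, by linarith, by linarith⟩
  · intro H x y
    obtain ⟨Ω, hΩne, hΩb, h1, h2⟩ :=
      H {x} {y} (Set.singleton_nonempty x) isBounded_singleton
        (fun z => ⟨x, rfl, by simp [infDist_singleton]⟩)
        (Set.singleton_nonempty y) isBounded_singleton
        (fun z => ⟨y, rfl, by simp [infDist_singleton]⟩)
    obtain ⟨z, hz⟩ := hΩne
    have fin1 : EMetric.hausdorffEdist ({x} : Set X) Ω ≠ ⊤ :=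
      hausdorffEdist_ne_top_of_nonempty_of_bounded (Set.singleton_nonempty x)
        ⟨z, hz⟩ isBounded_singleton hΩb
    have fin2 : EMetric.hausdorffEdist Ω ({y} : Set X) ≠ ⊤ :=
      hausdorffEdist_ne_top_of_nonempty_of_bounded ⟨z, hz⟩
        (Set.singleton_nonempty y) hΩb isBounded_singleton
    rw [hausdorffDist_singleton_pair] at h1 h2
    have hx : dist x z ≤ dist x y / 2 := by
      have h3 : infDist z ({x} : Set X) ≤ hausdorffDist Ω ({x} : Set X) :=
        infDist_le_hausdorffDist_of_mem hz (by rwa [EMetric.hausdorffEdist, EMetric.hausdorffEdist_comm] at fin1)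
      rw [infDist_singleton] at h3
      calc dist x z = dist z x := dist_comm _ _
        _ ≤ hausdorffDist Ω ({x} : Set X) := h3
        _ = hausdorffDist ({x} : Set X) Ω := hausdorffDist_comm
        _ = dist x y / 2 := h1
    have hy : dist z y ≤ dist x y / 2 := by
      have := infDist_le_hausdorffDist_of_mem hz fin2
      rw [infDist_singleton, h2] at this
      exact this
    have htri := dist_triangle x z y
    exact ⟨z, by linarith, by linarith⟩
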